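/- arXiv:2209.14935 — 10 statements merged into one kernel-verified Lean document; each statement's English description precedes it below -/
import Mathlib

section
/- Let S be a nonempty finite type, let Q : Matrix S S ℝ be row-stochastic (all entries nonnegative and every row sums to 1), and let γ be a real number with 0 ≤ γ < 1. Then the matrix 1 - γ • Q is invertible, the series ∑_{t≥0} γ^t • Q^t converges entrywise absolutely, and its sum equals (1 - γ • Q)⁻¹. -/
open Matrix

section Aux

attribute [local instance] Matrix.linftyOpNormedRing

private lemma aux_norm_lt {S : Type*} [Fintype S] [Nonempty S] [DecidableEq S]
    (Q : Matrix S S ℝ) (γ : ℝ)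
    (hQ0 : ∀ i j, 0 ≤ Q i j) (hQ1 : ∀ i, ∑ j, Q i j = 1)
    (hγ0 : 0 ≤ γ) (hγ1 : γ < 1) : ‖γ • Q‖ < 1 := by
  rw [Matrix.linfty_opNorm_def]
  have : ∀ i : S, (∑ j, ‖(γ • Q) i j‖₊ : NNReal) = Real.toNNReal γ := by
    intro i
    have : ∀ j, (‖(γ • Q) i j‖₊ : NNReal) = Real.toNNReal (γ * Q i j) := by
      intro j
      ext
      simp only [Matrix.smul_apply, smul_eq_mul, coe_nnnorm, Real.norm_eq_abs,
        Real.coe_toNNReal _ (mul_nonneg hγ0 (hQ0 i j)),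
        abs_of_nonneg (mul_nonneg hγ0 (hQ0 i j))]
    simp_rw [this]
    ext
    push_cast [Real.coe_toNNReal _ (mul_nonneg hγ0 (hQ0 _ _)),
      Real.coe_toNNReal _ hγ0]
    rw [← Finset.mul_sum, hQ1 i, mul_one]
  simp_rw [this]
  rw [Finset.sup_const Finset.univ_nonempty]
  simpa [Real.coe_toNNReal _ hγ0] using hγ1

private lemma aux_complete {S : Type*} [Fintype S] [DecidableEq S] :
    CompleteSpace (Matrix S S ℝ) := by
  infer_instance

theorem stmt0_aux {S : Type*} [Fintype S] [Nonempty S] [DecidableEq S]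
    (Q : Matrix S S ℝ) (γ : ℝ)
    (hQ0 : ∀ i j, 0 ≤ Q i j) (hQ1 : ∀ i, ∑ j, Q i j = 1)
    (hγ0 : 0 ≤ γ) (hγ1 : γ < 1) :
    IsUnit (1 - γ • Q) ∧
    HasSum (fun t : ℕ => γ ^ t • Q ^ t) (1 - γ • Q)⁻¹ := by
  have hn := aux_norm_lt Q γ hQ0 hQ1 hγ0 hγ1
  have := aux_complete (S := S)
  have : HasSummableGeomSeries (Matrix S S ℝ) := by
    letI : NormedSpace ℝ (Matrix S S ℝ) := Matrix.linftyOpNormedSpace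
    haveI : CompleteSpace (Matrix S S ℝ) := FiniteDimensional.complete ℝ _
    infer_instance
  have hu : IsUnit (1 - γ • Q) := isUnit_one_sub_of_norm_lt_one hn
  refine ⟨hu, ?_⟩
  have h := hasSum_geom_series_inverse (γ • Q) hn
  rw [Matrix.nonsing_inv_eq_ringInverse]
  simp only [smul_pow] at h
  exact h

end Aux

/-- For a row-stochastic matrix `Q` on a nonempty finite type `S` and a
discount factor `0 ≤ γ < 1`, the matrix `1 - γ • Q` is invertible, the Neumann series
`∑_{t ≥ 0} γ^t • Q^t` converges entrywise absolutely, and its sum equals `(1 - γ • Q)⁻¹`. -/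
theorem stmt0 {S : Type*} [Fintype S] [Nonempty S] [DecidableEq S]
    (Q : Matrix S S ℝ) (γ : ℝ)
    (hQ0 : ∀ i j, 0 ≤ Q i j) (hQ1 : ∀ i, ∑ j, Q i j = 1)
    (hγ0 : 0 ≤ γ) (hγ1 : γ < 1) :
    IsUnit (1 - γ • Q) ∧
    (∀ i j, Summable fun t : ℕ => |(γ ^ t • Q ^ t) i j|) ∧
    HasSum (fun t : ℕ => γ ^ t • Q ^ t) (1 - γ • Q)⁻¹ := by
  obtain ⟨h1, h3⟩ := stmt0_aux Q γ hQ0 hQ1 hγ0 hγ1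
  refine ⟨h1, ?_, h3⟩
  -- entries of Q^t are in [0,1]
  have hpow : ∀ t : ℕ, (∀ i j, 0 ≤ (Q ^ t) i j) ∧ (∀ i, ∑ j, (Q ^ t) i j = 1) := by
    intro t
    induction t with
    | zero => simp [Matrix.one_apply]; intro i j; positivity
    | succ n ih =>
      constructor
      · intro i j
        rw [pow_succ, Matrix.mul_apply]
        exact Finset.sum_nonneg fun k _ => mul_nonneg (ih.1 i k) (hQ0 k j)
      · intro i
        rw [pow_succ]
        simp_rw [Matrix.mul_apply]
        rw [Finset.sum_comm]
        simp_rw [← Finset.mul_sum, hQ1]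
        simpa using ih.2 i
  intro i j
  refine Summable.of_nonneg_of_le (fun t => abs_nonneg _) ?_
    (summable_geometric_of_lt_one hγ0 hγ1)
  intro t
  rw [Matrix.smul_apply, smul_eq_mul, abs_mul, abs_of_nonneg (pow_nonneg hγ0 t),
      abs_of_nonneg ((hpow t).1 i j)]
  have hle : (Q ^ t) i j ≤ 1 := by
    rw [← (hpow t).2 i]
    exact Finset.single_le_sum (fun k _ => (hpow t).1 i k) (Finset.mem_univ j)
  nlinarith [pow_nonneg hγ0 t, (hpow t).1 i j]
end

section
/- Let d ∈ ℕ, let Φ : Matrix S (Fin d) ℝ be a matrix of basic features (row φ(s) ∈ ℝ^d for each state s), and for each z ∈ ℝ^d let π_z be a deterministic policy. Define the universal successor features ψ_z := ∑_{t≥0} γ^t • (P * E_{π_z})^t * P * Φ ∈ Matrix (S × A) (Fin d) ℝ, and assume that for every z ∈ ℝ^d the policy π_z is greedy with respect to (s,a) ↦ ψ_z (s,a) ⬝ z (dot product of the row ψ_z (s,a) with z). If the reward satisfies r = Φ.mulVec w for some w ∈ ℝ^d (i.e., r(s) = φ(s) ⬝ w for all s), then the policy π_w is optimal for r, and Q^{π_w}_r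 (s,a) = ψ_w (s,a) ⬝ w for all (s,a) ∈ S × A. -/
open Matrix

/-- The selection matrix `E_π` of a deterministic policy `π : S → A`:
`E_π (s, (s',a)) = 1` if `s' = s` and `a = π s`, and `0` otherwise. -/
noncomputable def selMat {S A : Type*} [DecidableEq S] [DecidableEq A] (π : S → A) :
    Matrix S (S × A) ℝ :=
  fun s p => if p.1 = s ∧ p.2 = π s then 1 else 0

/-- The Q-function of policy `π` for reward `r`:
`Q^π_r = ∑_{t ≥ 0} γ^t • ((P * E_π)^t).mulVec (P.mulVec r)`. -/
noncomputable def Qfun {S A : Type*} [Fintype S] [Fintype A] [DecidableEq S] [DecidableEq A]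
    (P : Matrix (S × A) S ℝ) (γ : ℝ) (π : S → A) (r : S → ℝ) : S × A → ℝ :=
  ∑' t : ℕ, γ ^ t • ((P * selMat π) ^ t).mulVec (P.mulVec r)

/-- The (universal) successor features of the basic features `Φ` under policy `π`:
`ψ = ∑_{t ≥ 0} γ^t • ((P * E_π)^t * P * Φ)`. -/
noncomputable def USF {S A : Type*} [Fintype S] [Fintype A] [DecidableEq S] [DecidableEq A]
    {d : ℕ} (P : Matrix (S × A) S ℝ) (γ : ℝ) (Φ : Matrix S (Fin d) ℝ) (π : S → A) :
    Matrix (S × A) (Fin d) ℝ :=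
  ∑' t : ℕ, γ ^ t • ((P * selMat π) ^ t * P * Φ)

section aux
variable {S A : Type*} [Fintype S] [Fintype A] [DecidableEq S] [DecidableEq A]

lemma selMat_mulVec (π : S → A) (v : S × A → ℝ) :
    selMat π *ᵥ v = fun s => v (s, π s) := by
  funext s
  simp [selMat, mulVec, dotProduct, Fintype.sum_prod_type, ite_and]

lemma selMat_rowsum (π : S → A) (s : S) : ∑ p : S × A, selMat π s p = 1 := by
  simp [selMat, Fintype.sum_prod_type, ite_and]

lemma stoch_mul {X : Type*} [Fintype X] {M N : Matrix X X ℝ}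
    (hM0 : ∀ x y, 0 ≤ M x y) (hM1 : ∀ x, ∑ y, M x y = 1)
    (hN0 : ∀ x y, 0 ≤ N x y) (hN1 : ∀ x, ∑ y, N x y = 1) :
    (∀ x y, 0 ≤ (M * N) x y) ∧ (∀ x, ∑ y, (M * N) x y = 1) := by
  constructor
  · intro x y; rw [mul_apply]
    exact Finset.sum_nonneg fun k _ => mul_nonneg (hM0 x k) (hN0 k y)
  · intro x
    simp only [mul_apply]
    rw [Finset.sum_comm]
    simp [← Finset.mul_sum, hN1, hM1]
end aux

section aux2
variable {S A : Type*} [Fintype S] [Fintype A] [DecidableEq S] [DecidableEq A]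

lemma stoch_pow {X : Type*} [Fintype X] [DecidableEq X] {M : Matrix X X ℝ}
    (h0 : ∀ x y, 0 ≤ M x y) (h1 : ∀ x, ∑ y, M x y = 1) (t : ℕ) :
    (∀ x y, 0 ≤ (M ^ t) x y) ∧ (∀ x, ∑ y, (M ^ t) x y = 1) := by
  induction t with
  | zero =>
    constructor
    · intro x y; simp [pow_zero, Matrix.one_apply]; positivity
    · intro x; simp [pow_zero, Matrix.one_apply]
  | succ n ih =>
    rw [pow_succ]
    exact stoch_mul ih.1 ih.2 h0 h1

lemma stochPE (P : Matrix (S × A) S ℝ) (hP0 : ∀ sa s', 0 ≤ P sa s')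
    (hP1 : ∀ sa, ∑ s', P sa s' = 1) (π : S → A) :
    (∀ x y, 0 ≤ (P * selMat π) x y) ∧ (∀ x, ∑ y, (P * selMat π) x y = 1) := by
  constructor
  · intro x y; rw [mul_apply]
    refine Finset.sum_nonneg fun k _ => mul_nonneg (hP0 x k) ?_
    unfold selMat; positivity
  · intro x
    simp only [mul_apply]
    rw [Finset.sum_comm]
    simp [← Finset.mul_sum, selMat_rowsum, hP1]

lemma stoch_mulVec_bound {X : Type*} [Fintype X] {M : Matrix X X ℝ}
    (h0 : ∀ x y, 0 ≤ M x y) (h1 : ∀ x, ∑ y, M x y = 1) (v : X → ℝ) (C : ℝ)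
    (hv : ∀ x, |v x| ≤ C) (x : X) : |(M *ᵥ v) x| ≤ C := by
  have : (M *ᵥ v) x = ∑ y, M x y * v y := by simp [mulVec, dotProduct]
  rw [this]
  calc |∑ y, M x y * v y| ≤ ∑ y, |M x y * v y| := Finset.abs_sum_le_sum_abs _ _
    _ ≤ ∑ y, M x y * C := by
        refine Finset.sum_le_sum fun y _ => ?_
        rw [abs_mul, abs_of_nonneg (h0 x y)]
        exact mul_le_mul_of_nonneg_left (hv y) (h0 x y)
    _ = C := by rw [← Finset.sum_mul, h1, one_mul]

lemma summable_aux {X : Type*} [Fintype X] [DecidableEq X] {M : Matrix X X ℝ}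
    (h0 : ∀ x y, 0 ≤ M x y) (h1 : ∀ x, ∑ y, M x y = 1) {γ : ℝ}
    (hγ0 : 0 ≤ γ) (hγ1 : γ < 1) (b : X → ℝ) (x : X) :
    Summable (fun t : ℕ => γ ^ t * ((M ^ t) *ᵥ b) x) := by
  refine Summable.of_norm_bounded (g := fun t => γ ^ t * ‖b‖)
    ((summable_geometric_of_lt_one hγ0 hγ1).mul_right ‖b‖) fun t => ?_
  rw [Real.norm_eq_abs, abs_mul, abs_pow, abs_of_nonneg hγ0]
  refine mul_le_mul_of_nonneg_left ?_ (pow_nonneg hγ0 t)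
  exact stoch_mulVec_bound (stoch_pow h0 h1 t).1 (stoch_pow h0 h1 t).2 b ‖b‖
    (fun y => by simpa [Real.norm_eq_abs] using norm_le_pi_norm b y) x
end aux2


section aux3
variable {S A : Type*} [Fintype S] [Fintype A] [DecidableEq S] [DecidableEq A]
variable {P : Matrix (S × A) S ℝ} {γ : ℝ}

lemma Qfun_apply (hP0 : ∀ sa s', 0 ≤ P sa s') (hP1 : ∀ sa, ∑ s', P sa s' = 1)
    (hγ0 : 0 ≤ γ) (hγ1 : γ < 1) (π : S → A) (r : S → ℝ) (sa : S × A) :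
    Qfun P γ π r sa = ∑' t : ℕ, γ ^ t * (((P * selMat π) ^ t) *ᵥ (P *ᵥ r)) sa := by
  obtain ⟨h0, h1⟩ := stochPE P hP0 hP1 π
  rw [Qfun, tsum_apply]
  · exact tsum_congr fun t => by simp
  · exact Pi.summable.2 fun x => by
      simpa using summable_aux h0 h1 hγ0 hγ1 (P *ᵥ r) x

lemma colApp {X Y : Type*} [Fintype X] (M : Matrix X X ℝ) (B : Matrix X Y ℝ) (x : X) (j : Y) :
    (M * B) x j = (M *ᵥ fun y => B y j) x := by
  simp [mul_apply, mulVec, dotProduct]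

lemma USF_apply (hP0 : ∀ sa s', 0 ≤ P sa s') (hP1 : ∀ sa, ∑ s', P sa s' = 1)
    (hγ0 : 0 ≤ γ) (hγ1 : γ < 1) {d : ℕ} (Φ : Matrix S (Fin d) ℝ) (π : S → A)
    (sa : S × A) (j : Fin d) :
    USF P γ Φ π sa j = ∑' t : ℕ, γ ^ t * (((P * selMat π) ^ t) *ᵥ fun y => (P * Φ) y j) sa := by
  obtain ⟨h0, h1⟩ := stochPE P hP0 hP1 π
  have hsum : ∀ (x : S × A) (j : Fin d), Summable fun t : ℕ =>
      γ ^ t * (((P * selMat π) ^ t) *ᵥ fun y => (P * Φ) y j) x :=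
    fun x j => summable_aux h0 h1 hγ0 hγ1 _ x
  have hrw : ∀ (x : S × A) (j : Fin d) (t : ℕ), ((P * selMat π) ^ t * P * Φ) x j =
      (((P * selMat π) ^ t) *ᵥ fun y => (P * Φ) y j) x := by
    intro x j t
    rw [Matrix.mul_assoc]
    exact colApp _ _ _ _
  have hsum2 : ∀ (x : S × A) (j : Fin d), Summable fun t : ℕ =>
      γ ^ t * ((P * selMat π) ^ t * P * Φ) x j :=
    fun x j => (hsum x j).congr fun t => by rw [hrw]
  erw [USF, tsum_apply, tsum_apply]
  · exact tsum_congr fun t => by simp [hrw sa j t]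
  · exact Pi.summable.2 fun j' => by simpa using hsum2 sa j'
  · exact Pi.summable.2 fun x => Pi.summable.2 fun j' => by simpa using hsum2 x j'

end aux3

section aux4
variable {S A : Type*} [Fintype S] [Fintype A] [DecidableEq S] [DecidableEq A]
variable {P : Matrix (S × A) S ℝ} {γ : ℝ}

lemma bellman (hP0 : ∀ sa s', 0 ≤ P sa s') (hP1 : ∀ sa, ∑ s', P sa s' = 1)
    (hγ0 : 0 ≤ γ) (hγ1 : γ < 1) (π : S → A) (r : S → ℝ) (sa : S × A) :
    Qfun P γ π r sa = (P *ᵥ r) sa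
      + γ * ((P * selMat π) *ᵥ Qfun P γ π r) sa := by
  obtain ⟨h0, h1⟩ := stochPE P hP0 hP1 π
  set M := P * selMat π with hM
  set b := P *ᵥ r with hb
  have hsum : ∀ x, Summable fun t : ℕ => γ ^ t * ((M ^ t) *ᵥ b) x :=
    fun x => summable_aux h0 h1 hγ0 hγ1 b x
  have hQ : ∀ x, Qfun P γ π r x = ∑' t : ℕ, γ ^ t * ((M ^ t) *ᵥ b) x :=
    fun x => Qfun_apply hP0 hP1 hγ0 hγ1 π r x
  rw [hQ sa, Summable.tsum_eq_zero_add (hsum sa)]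
  congr 1
  · simp
  · have hterm : ∀ t : ℕ, γ ^ (t + 1) * ((M ^ (t + 1)) *ᵥ b) sa
        = ∑ y, (M sa y * γ) * (γ ^ t * ((M ^ t) *ᵥ b) y) := by
      intro t
      have : (M ^ (t + 1)) *ᵥ b = M *ᵥ ((M ^ t) *ᵥ b) := by
        rw [pow_succ']
        exact (mulVec_mulVec b M (M ^ t)).symm
      rw [this]
      have : (M *ᵥ ((M ^ t) *ᵥ b)) sa = ∑ y, M sa y * ((M ^ t) *ᵥ b) y := by
        simp [mulVec, dotProduct]
      rw [this, Finset.mul_sum]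
      exact Finset.sum_congr rfl fun y _ => by ring
    calc (∑' t : ℕ, γ ^ (t + 1) * ((M ^ (t + 1)) *ᵥ b) sa)
        = ∑' t : ℕ, ∑ y, (M sa y * γ) * (γ ^ t * ((M ^ t) *ᵥ b) y) :=
          tsum_congr fun t => hterm t
      _ = ∑ y, ∑' t : ℕ, (M sa y * γ) * (γ ^ t * ((M ^ t) *ᵥ b) y) :=
          Summable.tsum_finsetSum fun y _ => (hsum y).mul_left _
      _ = ∑ y, (M sa y * γ) * Qfun P γ π r y := by
          refine Finset.sum_congr rfl fun y _ => ?_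
          rw [tsum_mul_left, ← hQ y]
      _ = γ * (M *ᵥ Qfun P γ π r) sa := by
          simp only [mulVec, dotProduct, Finset.mul_sum]
          exact Finset.sum_congr rfl fun y _ => by ring

end aux4

lemma mulVec_mono {X Y : Type*} [Fintype Y] (M : Matrix X Y ℝ)
    (hM : ∀ a b, 0 ≤ M a b) (u v : Y → ℝ) (huv : ∀ y, u y ≤ v y) (x : X) :
    (M *ᵥ u) x ≤ (M *ᵥ v) x := by
  simp only [mulVec, dotProduct]
  exact Finset.sum_le_sum fun y _ => mul_le_mul_of_nonneg_left (huv y) (hM x y)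

/-- **successor-features optimality.** If for every `z ∈ ℝ^d` the policy `π_z`
is greedy with respect to `(s,a) ↦ ψ_z (s,a) ⬝ z`, and the reward is linear in the basic
features, `r = Φ.mulVec w`, then `π_w` is optimal for `r` and
`Q^{π_w}_r (s,a) = ψ_w (s,a) ⬝ w`. -/
theorem stmt3 {S A : Type*} [Fintype S] [Fintype A] [Nonempty S] [Nonempty A]
    [DecidableEq S] [DecidableEq A]
    (P : Matrix (S × A) S ℝ) (γ : ℝ)
    (hP0 : ∀ sa s', 0 ≤ P sa s') (hP1 : ∀ sa, ∑ s', P sa s' = 1)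
    (hγ0 : 0 ≤ γ) (hγ1 : γ < 1)
    {d : ℕ} (Φ : Matrix S (Fin d) ℝ) (πz : (Fin d → ℝ) → S → A)
    (hgreedy : ∀ z : Fin d → ℝ, ∀ s : S,
      USF P γ Φ (πz z) (s, πz z s) ⬝ᵥ z =
        Finset.univ.sup' Finset.univ_nonempty (fun a : A => USF P γ Φ (πz z) (s, a) ⬝ᵥ z))
    (r : S → ℝ) (w : Fin d → ℝ) (hr : r = Φ.mulVec w) :
    (∀ π' : S → A, ∀ sa : S × A, Qfun P γ π' r sa ≤ Qfun P γ (πz w) r sa) ∧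
    (∀ sa : S × A, Qfun P γ (πz w) r sa = USF P γ Φ (πz w) sa ⬝ᵥ w) := by
  obtain ⟨hM0, hM1⟩ := stochPE P hP0 hP1 (πz w)
  -- Part 2 : Qfun = USF ⬝ᵥ w
  have part2 : ∀ sa : S × A, Qfun P γ (πz w) r sa = USF P γ Φ (πz w) sa ⬝ᵥ w := by
    intro sa
    have hsum : ∀ j : Fin d, Summable fun t : ℕ =>
        γ ^ t * (((P * selMat (πz w)) ^ t) *ᵥ fun y => (P * Φ) y j) sa :=
      fun j => summable_aux hM0 hM1 hγ0 hγ1 _ sa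
    rw [Qfun_apply hP0 hP1 hγ0 hγ1, dotProduct]
    calc (∑' t : ℕ, γ ^ t * (((P * selMat (πz w)) ^ t) *ᵥ (P *ᵥ r)) sa)
        = ∑' t : ℕ, ∑ j : Fin d,
            (γ ^ t * (((P * selMat (πz w)) ^ t) *ᵥ fun y => (P * Φ) y j) sa) * w j := by
          refine tsum_congr fun t => ?_
          rw [hr, mulVec_mulVec w P Φ, mulVec_mulVec w _ (P * Φ)]
          have : (((P * selMat (πz w)) ^ t * (P * Φ)) *ᵥ w) sa
              = ∑ j : Fin d, ((P * selMat (πz w)) ^ t * (P * Φ)) sa j * w j := by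
            simp [mulVec, dotProduct]
          rw [this, Finset.mul_sum]
          exact Finset.sum_congr rfl fun j _ => by rw [colApp]; ring
      _ = ∑ j : Fin d, ∑' t : ℕ,
            (γ ^ t * (((P * selMat (πz w)) ^ t) *ᵥ fun y => (P * Φ) y j) sa) * w j :=
          Summable.tsum_finsetSum fun j _ => (hsum j).mul_right _
      _ = ∑ j : Fin d, USF P γ Φ (πz w) sa j * w j := by
          refine Finset.sum_congr rfl fun j _ => ?_
          rw [tsum_mul_right, USF_apply hP0 hP1 hγ0 hγ1]
  refine ⟨?_, part2⟩
  -- greedy comparison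
  have hgre : ∀ (s : S) (a : A),
      Qfun P γ (πz w) r (s, a) ≤ Qfun P γ (πz w) r (s, πz w s) := by
    intro s a
    rw [part2 (s, a), part2 (s, πz w s), hgreedy w s]
    exact Finset.le_sup' (fun a : A => USF P γ Φ (πz w) (s, a) ⬝ᵥ w) (Finset.mem_univ a)
  intro π' sa
  obtain ⟨h0', h1'⟩ := stochPE P hP0 hP1 π'
  have hTle : ∀ x : S × A, (P *ᵥ r) x + γ * ((P * selMat π') *ᵥ Qfun P γ (πz w) r) x
      ≤ Qfun P γ (πz w) r x := by
    intro x
    conv_rhs => rw [bellman hP0 hP1 hγ0 hγ1 (πz w) r x]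
    refine add_le_add_right (mul_le_mul_of_nonneg_left ?_ hγ0) _
    rw [← mulVec_mulVec, ← mulVec_mulVec, selMat_mulVec, selMat_mulVec]
    exact mulVec_mono P hP0 _ _ (fun s' => hgre s' (π' s')) x
  have mulVec_finsum : ∀ (M : Matrix (S × A) (S × A) ℝ) (v : ℕ → (S × A) → ℝ) (s : Finset ℕ),
      M *ᵥ (∑ t ∈ s, v t) = ∑ t ∈ s, M *ᵥ v t := fun M v s => by
    have h := map_sum M.mulVecLin v s
    simpa only [mulVecLin_apply] using h
  have claim : ∀ n : ℕ, ∀ x : S × A,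
      (∑ t ∈ Finset.range n, γ ^ t * (((P * selMat π') ^ t) *ᵥ (P *ᵥ r)) x)
        + γ ^ n * (((P * selMat π') ^ n) *ᵥ Qfun P γ (πz w) r) x
      ≤ Qfun P γ (πz w) r x := by
    intro n
    induction n with
    | zero => intro x; simp
    | succ n ih =>
      intro x
      have hfun : (fun y => (∑ t ∈ Finset.range n,
              γ ^ t * (((P * selMat π') ^ t) *ᵥ (P *ᵥ r)) y)
            + γ ^ n * (((P * selMat π') ^ n) *ᵥ Qfun P γ (πz w) r) y)
          = (∑ t ∈ Finset.range n, γ ^ t • (((P * selMat π') ^ t) *ᵥ (P *ᵥ r)))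
            + γ ^ n • (((P * selMat π') ^ n) *ᵥ Qfun P γ (πz w) r) := by
        funext y; simp [Finset.sum_apply]
      have hp : ∀ (m : ℕ) (v : S × A → ℝ),
          (P * selMat π') *ᵥ (((P * selMat π') ^ m) *ᵥ v)
            = ((P * selMat π') ^ (m + 1)) *ᵥ v := by
        intro m v; rw [mulVec_mulVec, ← pow_succ']
      have expand : ((P * selMat π') *ᵥ fun y =>
            (∑ t ∈ Finset.range n, γ ^ t * (((P * selMat π') ^ t) *ᵥ (P *ᵥ r)) y)
              + γ ^ n * (((P * selMat π') ^ n) *ᵥ Qfun P γ (πz w) r) y) x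
          = (∑ t ∈ Finset.range n, γ ^ t * (((P * selMat π') ^ (t + 1)) *ᵥ (P *ᵥ r)) x)
              + γ ^ n * (((P * selMat π') ^ (n + 1)) *ᵥ Qfun P γ (πz w) r) x := by
        rw [hfun, mulVec_add, mulVec_finsum]
        simp only [mulVec_smul, hp, Pi.add_apply, Finset.sum_apply, Pi.smul_apply, smul_eq_mul]
      have step : (∑ t ∈ Finset.range (n + 1),
            γ ^ t * (((P * selMat π') ^ t) *ᵥ (P *ᵥ r)) x)
            + γ ^ (n + 1) * (((P * selMat π') ^ (n + 1)) *ᵥ Qfun P γ (πz w) r) x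
          = (P *ᵥ r) x + γ * (((P * selMat π') *ᵥ fun y =>
              (∑ t ∈ Finset.range n, γ ^ t * (((P * selMat π') ^ t) *ᵥ (P *ᵥ r)) y)
                + γ ^ n * (((P * selMat π') ^ n) *ᵥ Qfun P γ (πz w) r) y) x) := by
        rw [expand,
          Finset.sum_range_succ' (fun t => γ ^ t * (((P * selMat π') ^ t) *ᵥ (P *ᵥ r)) x) n]
        simp only [pow_zero, one_mul, Matrix.one_mulVec]
        rw [mul_add, Finset.mul_sum]
        have : ∀ t ∈ Finset.range n,
            γ ^ (t + 1) * (((P * selMat π') ^ (t + 1)) *ᵥ (P *ᵥ r)) x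
              = γ * (γ ^ t * (((P * selMat π') ^ (t + 1)) *ᵥ (P *ᵥ r)) x) := fun t _ => by ring
        rw [Finset.sum_congr rfl this]
        ring
      rw [step]
      refine le_trans ?_ (hTle x)
      exact add_le_add_right (mul_le_mul_of_nonneg_left (mulVec_mono _ h0' _ _ ih x) hγ0) _
  have hsum' : Summable fun t : ℕ => γ ^ t * (((P * selMat π') ^ t) *ᵥ (P *ᵥ r)) sa :=
    summable_aux h0' h1' hγ0 hγ1 _ sa
  have hlim1 : Filter.Tendsto (fun n => ∑ t ∈ Finset.range n,
      γ ^ t * (((P * selMat π') ^ t) *ᵥ (P *ᵥ r)) sa) Filter.atTop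
      (nhds (Qfun P γ π' r sa)) := by
    rw [Qfun_apply hP0 hP1 hγ0 hγ1]
    exact hsum'.hasSum.tendsto_sum_nat
  have hlim2 : Filter.Tendsto (fun n => γ ^ n *
      (((P * selMat π') ^ n) *ᵥ Qfun P γ (πz w) r) sa) Filter.atTop (nhds 0) := by
    apply squeeze_zero_norm (a := fun n => γ ^ n * ‖Qfun P γ (πz w) r‖)
    · intro n
      rw [Real.norm_eq_abs, abs_mul, abs_pow, abs_of_nonneg hγ0]
      refine mul_le_mul_of_nonneg_left ?_ (pow_nonneg hγ0 n)
      exact stoch_mulVec_bound (stoch_pow h0' h1' n).1 (stoch_pow h0' h1' n).2 _ _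
        (fun y => by simpa [Real.norm_eq_abs] using norm_le_pi_norm (Qfun P γ (πz w) r) y) sa
    · simpa using (tendsto_pow_atTop_nhds_zero_of_lt_one hγ0 hγ1).mul_const
        ‖Qfun P γ (πz w) r‖
  have hfin := le_of_tendsto (hlim1.add hlim2)
    (Filter.Eventually.of_forall fun n => claim n sa)
  simpa using hfin
end

section
/- Let ρ : S → ℝ satisfy ρ(s) > 0 for all s, let d ∈ ℕ, let F : (S × A) → ℝ^d → ℝ^d (forward map, F (s,a) z ∈ ℝ^d), let B : S → ℝ^d (backward map), and for each z ∈ ℝ^d let π_z be a deterministic policy. Assume: (i) the exact forward-backward factorization holds, i.e., for every z ∈ ℝ^d and all (s,a) ∈ S × A and s' ∈ S, M^{π_z} ((s,a), s') = (F (s,a) z ⬝ B s') * ρ(s'); and (ii) each π_z is greedy with respect to (s,a) ↦ F (s,a) z ⬝ z. Then for every reward r : S → ℝ, setting z_r := ∑_s ρ(s) • r(s) • B(s), the policy π_{z_r} is optimal for r, and Q^{π_{z_r}}_r (s,a) = F (s,a) z_r ⬝ z_r for all (s,a) ∈ S × A. -/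
open Matrix

/-- The successor representation `M^π = ∑_{t ≥ 0} γ^t • (P * E_π)^t * P`. -/
noncomputable def SR {S A : Type*} [Fintype S] [Fintype A] [DecidableEq S] [DecidableEq A]
    (P : Matrix (S × A) S ℝ) (γ : ℝ) (π : S → A) : Matrix (S × A) S ℝ :=
  ∑' t : ℕ, γ ^ t • ((P * selMat π) ^ t * P)

namespace Stmt5Aux

lemma mul_stoch {I J K : Type*} [Fintype I] [Fintype J] [Fintype K]
    (M : Matrix I J ℝ) (N : Matrix J K ℝ)
    (hM0 : ∀ i j, 0 ≤ M i j) (hM1 : ∀ i, ∑ j, M i j = 1)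
    (hN0 : ∀ j k, 0 ≤ N j k) (hN1 : ∀ j, ∑ k, N j k = 1) :
    (∀ i k, 0 ≤ (M * N) i k) ∧ ∀ i, ∑ k, (M * N) i k = 1 := by
  constructor
  · intro i k
    simp only [Matrix.mul_apply]
    exact Finset.sum_nonneg fun j _ => mul_nonneg (hM0 i j) (hN0 j k)
  · intro i
    simp only [Matrix.mul_apply]
    rw [Finset.sum_comm]
    calc ∑ j, ∑ k, M i j * N j k = ∑ j, M i j * ∑ k, N j k := by
          simp [Finset.mul_sum]
      _ = 1 := by simp only [hN1, mul_one]; exact hM1 i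

lemma pow_stoch {I : Type*} [Fintype I] [DecidableEq I] (M : Matrix I I ℝ)
    (hM0 : ∀ i j, 0 ≤ M i j) (hM1 : ∀ i, ∑ j, M i j = 1) (t : ℕ) :
    (∀ i j, 0 ≤ (M ^ t) i j) ∧ ∀ i, ∑ j, (M ^ t) i j = 1 := by
  induction t with
  | zero =>
    constructor
    · intro i j; simp only [pow_zero, Matrix.one_apply]; split_ifs <;> norm_num
    · intro i; simp [pow_zero, Matrix.one_apply]
  | succ t ih =>
    rw [pow_succ]
    exact mul_stoch _ _ ih.1 ih.2 hM0 hM1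

lemma mulVec_nonneg {I J : Type*} [Fintype J] (M : Matrix I J ℝ) (hM0 : ∀ i j, 0 ≤ M i j)
    {v : J → ℝ} (hv : ∀ j, 0 ≤ v j) (i : I) : 0 ≤ M.mulVec v i := by
  simp only [Matrix.mulVec, dotProduct]
  exact Finset.sum_nonneg fun j _ => mul_nonneg (hM0 i j) (hv j)

lemma mulVec_bound {I J : Type*} [Fintype J] (M : Matrix I J ℝ)
    (hM0 : ∀ i j, 0 ≤ M i j) (hM1 : ∀ i, ∑ j, M i j = 1)
    {v : J → ℝ} {C : ℝ} (hv : ∀ j, |v j| ≤ C) (i : I) : |M.mulVec v i| ≤ C := by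
  simp only [Matrix.mulVec, dotProduct]
  calc |∑ j, M i j * v j| ≤ ∑ j, |M i j * v j| := Finset.abs_sum_le_sum_abs _ _
    _ ≤ ∑ j, M i j * C := by
        apply Finset.sum_le_sum
        intro j _
        rw [abs_mul, abs_of_nonneg (hM0 i j)]
        exact mul_le_mul_of_nonneg_left (hv j) (hM0 i j)
    _ = C := by rw [← Finset.sum_mul, hM1 i, one_mul]

variable {I : Type*} [Fintype I] [Nonempty I] [DecidableEq I]

lemma neumann_summable_pt {γ : ℝ} (hγ0 : 0 ≤ γ) (hγ1 : γ < 1)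
    (M : Matrix I I ℝ)
    (hM0 : ∀ i j, 0 ≤ M i j) (hM1 : ∀ i, ∑ j, M i j = 1) (b : I → ℝ) (i : I) :
    Summable fun t : ℕ => (γ ^ t • (M ^ t).mulVec b) i := by
  have hbC : ∀ j, |b j| ≤ Finset.univ.sup' Finset.univ_nonempty fun j => |b j| :=
    fun j => Finset.le_sup' (fun j => |b j|) (Finset.mem_univ j)
  apply Summable.of_abs
  apply Summable.of_nonneg_of_le (fun t => abs_nonneg _)
    (f := fun t => γ ^ t * Finset.univ.sup' Finset.univ_nonempty fun j => |b j|)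
  · intro t
    simp only [Pi.smul_apply, smul_eq_mul, abs_mul, abs_pow, abs_of_nonneg hγ0]
    exact mul_le_mul_of_nonneg_left
      (mulVec_bound _ (pow_stoch M hM0 hM1 t).1 (pow_stoch M hM0 hM1 t).2 hbC i)
      (pow_nonneg hγ0 t)
  · exact (summable_geometric_of_lt_one hγ0 hγ1).mul_right _

lemma neumann_summable {γ : ℝ} (hγ0 : 0 ≤ γ) (hγ1 : γ < 1)
    (M : Matrix I I ℝ)
    (hM0 : ∀ i j, 0 ≤ M i j) (hM1 : ∀ i, ∑ j, M i j = 1) (b : I → ℝ) :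
    Summable fun t : ℕ => γ ^ t • (M ^ t).mulVec b :=
  Pi.summable.2 fun i => neumann_summable_pt hγ0 hγ1 M hM0 hM1 b i

lemma neumann_fixed {γ : ℝ} (hγ0 : 0 ≤ γ) (hγ1 : γ < 1)
    (M : Matrix I I ℝ)
    (hM0 : ∀ i j, 0 ≤ M i j) (hM1 : ∀ i, ∑ j, M i j = 1) (b : I → ℝ) :
    (∑' t : ℕ, γ ^ t • (M ^ t).mulVec b)
      = b + γ • M.mulVec (∑' t : ℕ, γ ^ t • (M ^ t).mulVec b) := by
  have hs := neumann_summable hγ0 hγ1 M hM0 hM1 b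
  set φ : (I → ℝ) →L[ℝ] (I → ℝ) :=
    LinearMap.toContinuousLinearMap (Matrix.mulVecLin M) with hφ
  have hφa : ∀ v : I → ℝ, φ v = M.mulVec v := fun v => rfl
  have hs2 : Summable fun t : ℕ => φ (γ ^ t • (M ^ t).mulVec b) :=
    hs.map (φ : (I → ℝ) →+ (I → ℝ)) φ.continuous
  have h0 : (γ ^ 0 • (M ^ 0).mulVec b) = b := by simp
  conv_lhs => rw [Summable.tsum_eq_zero_add hs, h0]
  congr 1
  calc ∑' t : ℕ, γ ^ (t + 1) • (M ^ (t + 1)).mulVec b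
      = ∑' t : ℕ, γ • φ (γ ^ t • (M ^ t).mulVec b) := by
        apply tsum_congr; intro t
        rw [hφa, Matrix.mulVec_smul, Matrix.mulVec_mulVec, ← pow_succ', smul_smul, ← pow_succ']
    _ = γ • ∑' t : ℕ, φ (γ ^ t • (M ^ t).mulVec b) := Summable.tsum_const_smul γ hs2
    _ = γ • φ (∑' t : ℕ, γ ^ t • (M ^ t).mulVec b) := by
        rw [ContinuousLinearMap.map_tsum φ hs]
    _ = γ • M.mulVec (∑' t : ℕ, γ ^ t • (M ^ t).mulVec b) := by rw [hφa]

lemma neumann_unique {γ : ℝ} (hγ0 : 0 ≤ γ) (hγ1 : γ < 1)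
    (M : Matrix I I ℝ)
    (hM0 : ∀ i j, 0 ≤ M i j) (hM1 : ∀ i, ∑ j, M i j = 1) (b q : I → ℝ)
    (hq : q = b + γ • M.mulVec q) :
    q = ∑' t : ℕ, γ ^ t • (M ^ t).mulVec b := by
  have hNfix := neumann_fixed hγ0 hγ1 M hM0 hM1 b
  set N := ∑' t : ℕ, γ ^ t • (M ^ t).mulVec b with hN
  have hΔfix : q - N = γ • M.mulVec (q - N) := by
    calc q - N = (b + γ • M.mulVec q) - (b + γ • M.mulVec N) := by rw [← hq, ← hNfix]
      _ = γ • M.mulVec (q - N) := by rw [Matrix.mulVec_sub, smul_sub]; abel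
  set C := Finset.univ.sup' Finset.univ_nonempty (fun i => |(q - N) i|) with hCdef
  have hle : ∀ i, |(q - N) i| ≤ C :=
    fun i => Finset.le_sup' (fun i => |(q - N) i|) (Finset.mem_univ i)
  have key : ∀ i, |(q - N) i| ≤ γ * C := by
    intro i
    calc |(q - N) i| = |(γ • M.mulVec (q - N)) i| := by rw [← hΔfix]
      _ = γ * |M.mulVec (q - N) i| := by
          rw [Pi.smul_apply, smul_eq_mul, abs_mul, abs_of_nonneg hγ0]
      _ ≤ γ * C := mul_le_mul_of_nonneg_left (mulVec_bound M hM0 hM1 hle i) hγ0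
  have hC : C ≤ γ * C := Finset.sup'_le _ _ fun i _ => key i
  have hC0 : 0 ≤ C := le_trans (abs_nonneg _) (hle (Classical.arbitrary I))
  have hC0' : C ≤ 0 := by nlinarith
  funext i
  have : |(q - N) i| ≤ 0 := le_trans (hle i) hC0'
  have h0 : (q - N) i = 0 := abs_nonpos_iff.mp this
  have := sub_eq_zero.mp (by simpa using h0)
  exact this

end Stmt5Aux

open Stmt5Aux in
/-- **forward-backward optimality.** Assume the exact forward-backward
factorization `M^{π_z} ((s,a), s') = (F (s,a) z ⬝ B s') * ρ(s')` where `ρ > 0`, and that each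
policy `π_z` is greedy with respect to `(s,a) ↦ F (s,a) z ⬝ z`. Then for every reward `r`,
setting `z_r := ∑_s ρ(s) r(s) B(s)`, the policy `π_{z_r}` is optimal for `r`, and
`Q^{π_{z_r}}_r (s,a) = F (s,a) z_r ⬝ z_r`. -/
theorem stmt5 {S A : Type*} [Fintype S] [Fintype A] [Nonempty S] [Nonempty A]
    [DecidableEq S] [DecidableEq A]
    (P : Matrix (S × A) S ℝ) (γ : ℝ)
    (hP0 : ∀ sa s', 0 ≤ P sa s') (hP1 : ∀ sa, ∑ s', P sa s' = 1)
    (hγ0 : 0 ≤ γ) (hγ1 : γ < 1)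
    (ρ : S → ℝ) (hρ : ∀ s, 0 < ρ s) {d : ℕ}
    (F : S × A → (Fin d → ℝ) → Fin d → ℝ) (B : S → Fin d → ℝ)
    (πz : (Fin d → ℝ) → S → A)
    (hFB : ∀ z : Fin d → ℝ, ∀ sa : S × A, ∀ s' : S,
      SR P γ (πz z) sa s' = (F sa z ⬝ᵥ B s') * ρ s')
    (hgreedy : ∀ z : Fin d → ℝ, ∀ s : S,
      F (s, πz z s) z ⬝ᵥ z =
        Finset.univ.sup' Finset.univ_nonempty (fun a : A => F (s, a) z ⬝ᵥ z))
    (r : S → ℝ) (zr : Fin d → ℝ) (hzr : zr = ∑ s, ρ s • r s • B s) :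
    (∀ π' : S → A, ∀ sa : S × A, Qfun P γ π' r sa ≤ Qfun P γ (πz zr) r sa) ∧
    (∀ sa : S × A, Qfun P γ (πz zr) r sa = F sa zr ⬝ᵥ zr) := by
  -- stochasticity of the selection matrices
  have hsel : ∀ π : S → A, (∀ s p, 0 ≤ selMat (A := A) π s p) ∧
      ∀ s, ∑ p : S × A, selMat π s p = 1 := by
    intro π
    have hiff : ∀ (s : S) (p : S × A), (p.1 = s ∧ p.2 = π s) ↔ p = (s, π s) := by
      intro s p
      rw [Prod.ext_iff]
    constructor
    · intro s p; unfold selMat; split_ifs <;> norm_num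
    · intro s
      unfold selMat
      simp only [hiff s]
      rw [Finset.sum_congr rfl (fun p _ => by
        show (if p = (s, π s) then (1:ℝ) else 0) = if p = (s, π s) then (fun _ => (1:ℝ)) p else 0
        rfl)]
      rw [Finset.sum_ite_eq' Finset.univ (s, π s) (fun _ => (1:ℝ))]
      simp
  have hMst : ∀ π : S → A, (∀ i j, 0 ≤ (P * selMat π) i j) ∧
      ∀ i, ∑ j, (P * selMat π) i j = 1 :=
    fun π => mul_stoch P (selMat π) hP0 hP1 (hsel π).1 (hsel π).2
  set πb := πz zr with hπb
  set Mb := P * selMat πb with hMb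
  -- values through the selection matrix
  have hselmul : ∀ (π : S → A) (v : S × A → ℝ) (s : S),
      (selMat π).mulVec v s = v (s, π s) := by
    intro π v s
    have hiff : ∀ p : S × A, (p.1 = s ∧ p.2 = π s) ↔ p = (s, π s) := by
      intro p; rw [Prod.ext_iff]
    simp only [Matrix.mulVec, dotProduct, selMat, hiff]
    rw [Finset.sum_congr rfl (fun p _ => by
      show (if p = (s, π s) then (1:ℝ) else 0) * v p
          = if p = (s, π s) then (fun p => v p) p else 0
      split_ifs <;> simp)]
    rw [Finset.sum_ite_eq' Finset.univ (s, π s) (fun p => v p)]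
    simp
  -- Part 2 first
  have hpow := fun t => pow_stoch Mb (hMst πb).1 (hMst πb).2 t
  have hMP : ∀ t : ℕ, (∀ i j, 0 ≤ ((Mb ^ t) * P) i j) ∧
      ∀ i, ∑ j, ((Mb ^ t) * P) i j = 1 :=
    fun t => mul_stoch _ _ (hpow t).1 (hpow t).2 hP0 hP1
  have hent : ∀ (t : ℕ) (i : S × A) (j : S), ((Mb ^ t) * P) i j ≤ 1 := by
    intro t i j
    calc ((Mb ^ t) * P) i j ≤ ∑ j', ((Mb ^ t) * P) i j' :=
          Finset.single_le_sum (fun j' _ => (hMP t).1 i j') (Finset.mem_univ j)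
      _ = 1 := (hMP t).2 i
  have hsum_pt : ∀ (sa : S × A) (s' : S),
      Summable fun t : ℕ => γ ^ t * ((Mb ^ t) * P) sa s' := by
    intro sa s'
    apply Summable.of_abs
    apply Summable.of_nonneg_of_le (fun t => abs_nonneg _) (f := fun t => γ ^ t)
    · intro t
      rw [abs_mul, abs_pow, abs_of_nonneg hγ0, abs_of_nonneg ((hMP t).1 sa s')]
      calc γ ^ t * ((Mb ^ t) * P) sa s' ≤ γ ^ t * 1 :=
            mul_le_mul_of_nonneg_left (hent t sa s') (pow_nonneg hγ0 t)
        _ = γ ^ t := mul_one _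
    · exact summable_geometric_of_lt_one hγ0 hγ1
  have hsm : Summable fun t : ℕ => γ ^ t • ((Mb ^ t) * P) := by
    apply Pi.summable.2
    intro sa
    apply Pi.summable.2
    intro s'
    simpa [smul_eq_mul] using hsum_pt sa s'
  have hSRapp : ∀ (sa : S × A) (s' : S),
      SR P γ πb sa s' = ∑' t : ℕ, γ ^ t * ((Mb ^ t) * P) sa s' := by
    intro sa s'
    have h1 : SR P γ πb sa = ∑' t : ℕ, (γ ^ t • ((Mb ^ t) * P)) sa := by
      rw [SR]
      exact tsum_apply hsm
    have h2 : SR P γ πb sa s' = ∑' t : ℕ, (γ ^ t • ((Mb ^ t) * P)) sa s' := by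
      rw [h1]
      exact tsum_apply (Pi.summable.1 hsm sa)
    rw [h2]
    exact tsum_congr fun t => by simp [smul_eq_mul]
  have hQ2 : ∀ sa : S × A, Qfun P γ πb r sa = F sa zr ⬝ᵥ zr := by
    intro sa
    have hsumQ := neumann_summable hγ0 hγ1 Mb (hMst πb).1 (hMst πb).2 (P.mulVec r)
    have step1 : Qfun P γ πb r sa
        = ∑' t : ℕ, γ ^ t * (((Mb ^ t) * P).mulVec r) sa := by
      rw [Qfun]
      rw [tsum_apply hsumQ]
      exact tsum_congr fun t => by
        rw [Matrix.mulVec_mulVec]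
        simp [smul_eq_mul]
    have step2 : Qfun P γ πb r sa
        = ∑ s', (∑' t : ℕ, γ ^ t * ((Mb ^ t) * P) sa s') * r s' := by
      rw [step1]
      have : ∀ t : ℕ, γ ^ t * (((Mb ^ t) * P).mulVec r) sa
          = ∑ s', (γ ^ t * ((Mb ^ t) * P) sa s') * r s' := by
        intro t
        simp only [Matrix.mulVec, dotProduct, Finset.mul_sum]
        exact Finset.sum_congr rfl fun s' _ => by ring
      rw [tsum_congr this]
      rw [Summable.tsum_finsetSum (fun s' _ => (hsum_pt sa s').mul_right (r s'))]
      exact Finset.sum_congr rfl fun s' _ => tsum_mul_right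
    rw [step2]
    have : ∀ s', (∑' t : ℕ, γ ^ t * ((Mb ^ t) * P) sa s') * r s'
        = ((F sa zr ⬝ᵥ B s') * ρ s') * r s' := by
      intro s'
      rw [← hSRapp sa s', hFB zr sa s']
    rw [Finset.sum_congr rfl fun s' _ => this s']
    rw [hzr]
    simp only [dotProduct, Finset.sum_apply, Pi.smul_apply, smul_eq_mul, Finset.mul_sum,
      Finset.sum_mul]
    rw [Finset.sum_comm]
    exact Finset.sum_congr rfl fun s' _ => Finset.sum_congr rfl fun i _ => by ring
  refine ⟨?_, hQ2⟩
  intro π' sa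
  set M' := P * selMat π' with hM'
  set Q := Qfun P γ πb r with hQ
  have hQfix : Q = P.mulVec r + γ • Mb.mulVec Q := by
    rw [hQ]
    show Qfun P γ πb r = P.mulVec r + γ • Mb.mulVec (Qfun P γ πb r)
    rw [Qfun]
    exact neumann_fixed hγ0 hγ1 Mb (hMst πb).1 (hMst πb).2 (P.mulVec r)
  set c : S × A → ℝ := γ • (Mb.mulVec Q - M'.mulVec Q) with hc
  have hc0 : ∀ i, 0 ≤ c i := by
    intro i
    have hinner : ∀ s : S,
        0 ≤ ((selMat πb).mulVec Q - (selMat π').mulVec Q) s := by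
      intro s
      rw [Pi.sub_apply, hselmul, hselmul]
      rw [hQ2 (s, πb s), hQ2 (s, π' s)]
      rw [hgreedy zr s]
      have := Finset.le_sup' (f := fun a : A => F (s, a) zr ⬝ᵥ zr)
        (Finset.mem_univ (π' s))
      linarith
    have : Mb.mulVec Q - M'.mulVec Q
        = P.mulVec ((selMat πb).mulVec Q - (selMat π').mulVec Q) := by
      rw [Matrix.mulVec_sub, hMb, hM', ← Matrix.mulVec_mulVec, ← Matrix.mulVec_mulVec]
    rw [hc, Pi.smul_apply, this, smul_eq_mul]
    exact mul_nonneg hγ0 (mulVec_nonneg P hP0 hinner i)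
  have hfix' : Q = (P.mulVec r + c) + γ • M'.mulVec Q := by
    rw [hc, smul_sub]
    conv_lhs => rw [hQfix]
    abel
  have hkey : Q = ∑' t : ℕ, γ ^ t • (M' ^ t).mulVec (P.mulVec r + c) :=
    neumann_unique hγ0 hγ1 M' (hMst π').1 (hMst π').2 (P.mulVec r + c) Q hfix'
  have hsplit : (∑' t : ℕ, γ ^ t • (M' ^ t).mulVec (P.mulVec r + c))
      = (∑' t : ℕ, γ ^ t • (M' ^ t).mulVec (P.mulVec r))
        + (∑' t : ℕ, γ ^ t • (M' ^ t).mulVec c) := by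
    rw [← Summable.tsum_add (neumann_summable hγ0 hγ1 M' (hMst π').1 (hMst π').2 (P.mulVec r))
      (neumann_summable hγ0 hγ1 M' (hMst π').1 (hMst π').2 c)]
    exact tsum_congr fun t => by rw [Matrix.mulVec_add, smul_add]
  have hQ'def : Qfun P γ π' r = ∑' t : ℕ, γ ^ t • (M' ^ t).mulVec (P.mulVec r) := by
    rw [Qfun]
  have hN'c : 0 ≤ (∑' t : ℕ, γ ^ t • (M' ^ t).mulVec c) sa := by
    rw [tsum_apply (neumann_summable hγ0 hγ1 M' (hMst π').1 (hMst π').2 c)]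
    apply tsum_nonneg
    intro t
    rw [Pi.smul_apply, smul_eq_mul]
    exact mul_nonneg (pow_nonneg hγ0 t)
      (mulVec_nonneg _ (pow_stoch M' (hMst π').1 (hMst π').2 t).1 hc0 sa)
  have : Q sa = Qfun P γ π' r sa + (∑' t : ℕ, γ ^ t • (M' ^ t).mulVec c) sa := by
    rw [hkey, hsplit, hQ'def]
    simp
  linarith
end

section
/- Let S' be a nonempty finite type, ι an arbitrary type, ρ : S' → ℝ, d ∈ ℕ, F : ι → ℝ^d, B : S' → ℝ^d, and let M : ι → S' → ℝ satisfy M x s' = (F x ⬝ B s') * ρ(s') for all x ∈ ι and s' ∈ S'. If the matrix Σ := ∑_{s'} ρ(s') • (B(s') B(s')ᵀ) (a d × d real matrix) is invertible and φ(s) := Σ⁻¹.mulVec (B s), then ∑_{s'} M x s' • φ(s') = F x for every x ∈ ι. -/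
open Matrix

/-- If `M x s' = (F x ⬝ B s') * ρ(s')` and the matrix
`Σ = ∑_{s'} ρ(s') • B(s') B(s')ᵀ` is invertible, then with `φ(s) := Σ⁻¹ B(s)` one has
`∑_{s'} M x s' • φ(s') = F x` for every `x`: the factorization makes `F` the successor
features of the basic features `φ = (E_ρ[B Bᵀ])⁻¹ B`. -/
theorem stmt6 {S' : Type*} [Fintype S'] [Nonempty S'] {ι : Type*}
    (ρ : S' → ℝ) {d : ℕ}
    (F : ι → Fin d → ℝ) (B : S' → Fin d → ℝ) (M : ι → S' → ℝ)
    (hM : ∀ (x : ι) (s' : S'), M x s' = (F x ⬝ᵥ B s') * ρ s')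
    (Sig : Matrix (Fin d) (Fin d) ℝ)
    (hSig : Sig = ∑ s', ρ s' • vecMulVec (B s') (B s'))
    (hinv : IsUnit Sig)
    (φ : S' → Fin d → ℝ) (hφ : ∀ s, φ s = Sig⁻¹.mulVec (B s)) :
    ∀ x : ι, ∑ s', M x s' • φ s' = F x := by
  intro x
  have key : Sig.mulVec (F x) = ∑ s', M x s' • B s' := by
    funext i
    rw [hSig]
    simp only [Finset.sum_apply, Pi.smul_apply, mulVec, dotProduct,
      Matrix.sum_apply, Matrix.smul_apply, vecMulVec_apply, smul_eq_mul, hM]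
    simp_rw [Finset.sum_mul]
    rw [Finset.sum_comm]
    refine Finset.sum_congr rfl fun s' _ => Finset.sum_congr rfl fun j _ => by ring
  calc ∑ s', M x s' • φ s' = Sig⁻¹.mulVec (∑ s', M x s' • B s') := by
        simp_rw [hφ, ← Matrix.mulVec_smul]
        exact (map_sum Sig⁻¹.mulVecLin (fun s' => M x s' • B s') Finset.univ).symm
    _ = F x := by
        rw [← key, Matrix.mulVec_mulVec, Matrix.nonsing_inv_mul _ (isUnit_iff_isUnit_det _ |>.mp hinv), Matrix.one_mulVec]
end

section
/- Suppose d ∈ ℕ and the transition matrix factorizes as P = C * Uᵀ, where C : Matrix (S × A) (Fin d) ℝ (rows χ(s,a)) and U : Matrix S (Fin d) ℝ (rows μ(s')). For a deterministic policy π let C_π := E_π * C (so the row of C_π at s is χ(s, π s)). Then the d × d matrix 1 - γ • (Uᵀ * C_π) is invertible, and for every reward r : S → ℝ, Q^π_r = C.mulVec ((1 - γ • (Uᵀ * C_π))⁻¹.mulVec (Uᵀ.mulVec r)). In particular, every Q-function Q^π_r is a linear combination of the columns of C and depends on r only through the vector Uᵀ.mulVec r ∈ ℝ^d. -/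
open Matrix

attribute [local instance] Matrix.linftyOpNormedAddCommGroup Matrix.linftyOpNormedRing
  Matrix.linftyOpNormedSpace Matrix.linftyOpNormedAlgebra

/-- A row-stochastic real matrix has `L∞`-operator norm at most 1. -/
lemma stoch_norm_le {n : Type*} [Fintype n] (M : Matrix n n ℝ)
    (h0 : ∀ i j, 0 ≤ M i j) (h1 : ∀ i, ∑ j, M i j = 1) : ‖M‖ ≤ 1 := by
  rw [Matrix.linfty_opNorm_def]
  rw [show (1 : ℝ) = ((1 : NNReal) : ℝ) by simp, NNReal.coe_le_coe]
  refine Finset.sup_le fun i _ => ?_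
  rw [← NNReal.coe_le_coe]
  push_cast
  have : ∑ j, ‖M i j‖ = ∑ j, M i j := by
    refine Finset.sum_congr rfl fun j _ => ?_
    rw [Real.norm_eq_abs, abs_of_nonneg (h0 i j)]
  rw [this, h1]

theorem stmt7 {S A : Type*} [Fintype S] [Fintype A] [Nonempty S] [Nonempty A]
    [DecidableEq S] [DecidableEq A]
    (P : Matrix (S × A) S ℝ) (γ : ℝ)
    (hP0 : ∀ sa s', 0 ≤ P sa s') (hP1 : ∀ sa, ∑ s', P sa s' = 1)
    (hγ0 : 0 ≤ γ) (hγ1 : γ < 1)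
    {d : ℕ} (C : Matrix (S × A) (Fin d) ℝ) (U : Matrix S (Fin d) ℝ)
    (hP : P = C * Uᵀ) (π : S → A) :
    IsUnit (1 - γ • (Uᵀ * (selMat π * C))) ∧
    ∀ r : S → ℝ,
      Qfun P γ π r =
        C.mulVec ((1 - γ • (Uᵀ * (selMat π * C)))⁻¹.mulVec (Uᵀ.mulVec r)) := by
  set M : Matrix (S × A) (S × A) ℝ := P * selMat π with hMdef
  set X : Matrix (Fin d) (S × A) ℝ := Uᵀ * selMat π with hXdef
  set B : Matrix (Fin d) (S × A) ℝ := γ • X with hBdef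
  have hM : M = C * X := by rw [hMdef, hXdef, hP, Matrix.mul_assoc]
  -- entrywise formula for M
  have hsel : ∀ p q, M p q = P p q.1 * (if q.2 = π q.1 then 1 else 0) := by
    intro p q
    rw [hMdef, Matrix.mul_apply, Finset.sum_eq_single q.1]
    · simp [selMat]
    · intro b _ hb
      simp [selMat, Ne.symm hb]
    · simp
  have hM0 : ∀ p q, 0 ≤ M p q := by
    intro p q
    rw [hsel]
    have := hP0 p q.1
    split <;> simp [this]
  have hM1 : ∀ p, ∑ q, M p q = 1 := by
    intro p
    simp only [hsel]
    rw [Fintype.sum_prod_type]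
    have : ∀ s' : S, ∑ a' : A, P p s' * (if a' = π s' then (1:ℝ) else 0) = P p s' := by
      intro s'
      simp [mul_ite, Finset.sum_ite_eq']
    simp only [this]
    exact hP1 p
  -- norm bound and invertibility of 1 - γ • M
  have hnorm : ‖γ • M‖ < 1 := by
    have h1 : ‖γ • M‖ = γ * ‖M‖ := by
      rw [norm_smul, Real.norm_eq_abs, abs_of_nonneg hγ0]
    rw [h1]
    calc γ * ‖M‖ ≤ γ * 1 := by
          exact mul_le_mul_of_nonneg_left (stoch_norm_le M hM0 hM1) hγ0
      _ = γ := mul_one γ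
      _ < 1 := hγ1
  have hUnit : IsUnit (1 - γ • M) := isUnit_one_sub_of_norm_lt_one hnorm
  set W : Matrix (S × A) (S × A) ℝ := (1 - γ • M)⁻¹ with hWdef
  have hdet : IsUnit (1 - γ • M).det := (Matrix.isUnit_iff_isUnit_det _).mp hUnit
  have hW1 : (1 - γ • M) * W = 1 := Matrix.mul_nonsing_inv _ hdet
  have hMW : (γ • M) * W = W - 1 := by
    rw [Matrix.sub_mul, Matrix.one_mul] at hW1
    rw [← hW1]; abel
  -- C * B = γ • M
  have hCB : C * B = γ • M := by
    rw [hBdef, Matrix.mul_smul, ← hM]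
  -- the key right-inverse identity in dimension d
  have e1 : (B * C) * (B * (W * C)) = B * (W * C) - B * C := by
    have step : (B * C) * (B * (W * C)) = B * (((C * B) * W) * C) := by
      simp only [Matrix.mul_assoc]
    rw [step, hCB, hMW, Matrix.sub_mul, Matrix.one_mul, Matrix.mul_sub]
  have key : (1 - B * C) * (1 + B * (W * C)) = 1 := by
    rw [Matrix.sub_mul, Matrix.one_mul, Matrix.mul_add, Matrix.mul_one, e1]
    abel
  -- identify the matrix in the statement
  have hEq : 1 - γ • (Uᵀ * (selMat π * C)) = 1 - B * C := by
    rw [hBdef, Matrix.smul_mul, hXdef, Matrix.mul_assoc]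
  have hUnitd : IsUnit (1 - γ • (Uᵀ * (selMat π * C))) := by
    rw [hEq]
    exact (Matrix.isUnit_iff_isUnit_det _).mpr (Matrix.isUnit_det_of_right_inverse key)
  have hInvd : (1 - B * C)⁻¹ = 1 + B * (W * C) := Matrix.inv_eq_right_inv key
  -- push-through identity
  have push : W * C = C * (1 + B * (W * C)) := by
    rw [Matrix.mul_add, Matrix.mul_one, ← Matrix.mul_assoc C B, hCB,
      ← Matrix.mul_assoc, hMW, Matrix.sub_mul, Matrix.one_mul]
    abel
  refine ⟨hUnitd, fun r => ?_⟩
  -- the geometric series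
  set v : (S × A) → ℝ := P.mulVec r with hvdef
  have hterm : ∀ t : ℕ, γ ^ t • (M ^ t).mulVec v = ((γ • M) ^ t).mulVec v := by
    intro t
    rw [smul_pow, Matrix.smul_mulVec]
  have hsum : Summable (fun t : ℕ => (γ • M) ^ t) :=
    summable_geometric_of_norm_lt_one hnorm
  let L : Matrix (S × A) (S × A) ℝ →ₗ[ℝ] ((S × A) → ℝ) :=
    { toFun := fun N => N.mulVec v
      map_add' := fun N1 N2 => Matrix.add_mulVec N1 N2 v
      map_smul' := fun c N => Matrix.smul_mulVec c N v }
  have hQ : Qfun P γ π r = (∑' t : ℕ, (γ • M) ^ t).mulVec v := by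
    rw [Qfun]
    calc (∑' t : ℕ, γ ^ t • (M ^ t).mulVec v)
        = ∑' t : ℕ, L.toContinuousLinearMap ((γ • M) ^ t) := by
          refine tsum_congr fun t => ?_
          rw [hterm t]
          rfl
      _ = L.toContinuousLinearMap (∑' t : ℕ, (γ • M) ^ t) :=
          (L.toContinuousLinearMap.map_tsum hsum).symm
      _ = _ := rfl
  have hgeom : (∑' t : ℕ, (γ • M) ^ t) = W := by
    refine (geom_series_eq_inverse (γ • M) hnorm).trans ?_
    rw [hWdef]
    exact (Matrix.inv_eq_right_inv (Ring.mul_inverse_cancel _ hUnit)).symm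
  have hv : v = C.mulVec (Uᵀ.mulVec r) := by
    rw [hvdef, hP, ← Matrix.mulVec_mulVec]
  rw [hQ, hgeom, hEq, hInvd, hv, Matrix.mulVec_mulVec]
  conv_lhs => rw [push, ← Matrix.mulVec_mulVec]
end

section
/- Suppose ρ : S → ℝ, χ : S × A → ℝ^d, μ : S → ℝ^d, and the transitions are given by the finite-rank model P ((s,a), s') = (χ(s,a) ⬝ μ(s')) * ρ(s') for all (s,a) ∈ S × A and s' ∈ S. If two rewards r, r' : S → ℝ satisfy ∑_s ρ(s) • r(s) • μ(s) = ∑_s ρ(s) • r'(s) • μ(s) in ℝ^d, then Q^π_r = Q^π_{r'} for every deterministic policy π. -/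
open Matrix

/-- Under the finite-rank transition model
`P ((s,a), s') = (χ(s,a) ⬝ μ(s')) * ρ(s')`, two rewards with the same reward features
`∑_s ρ(s) r(s) μ(s)` have the same Q-function for every deterministic policy. -/
theorem stmt8 {S A : Type*} [Fintype S] [Fintype A] [Nonempty S] [Nonempty A]
    [DecidableEq S] [DecidableEq A]
    (P : Matrix (S × A) S ℝ) (γ : ℝ)
    (hP0 : ∀ sa s', 0 ≤ P sa s') (hP1 : ∀ sa, ∑ s', P sa s' = 1)
    (hγ0 : 0 ≤ γ) (hγ1 : γ < 1)
    (ρ : S → ℝ) {d : ℕ} (χ : S × A → Fin d → ℝ) (μ : S → Fin d → ℝ)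
    (hP : ∀ (sa : S × A) (s' : S), P sa s' = (χ sa ⬝ᵥ μ s') * ρ s')
    (r r' : S → ℝ)
    (hrr' : ∑ s, ρ s • r s • μ s = ∑ s, ρ s • r' s • μ s) :
    ∀ π : S → A, Qfun P γ π r = Qfun P γ π r' := by
  have key : P.mulVec r = P.mulVec r' := by
    funext sa
    have h : ∀ g : S → ℝ, P.mulVec g sa = χ sa ⬝ᵥ ∑ s, ρ s • g s • μ s := by
      intro g
      simp only [mulVec, dotProduct, Finset.sum_apply, Pi.smul_apply, smul_eq_mul,
        Finset.mul_sum, hP]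
      rw [Finset.sum_comm]
      refine Finset.sum_congr rfl fun s _ => ?_
      rw [Finset.sum_mul, Finset.sum_mul]
      exact Finset.sum_congr rfl fun i _ => by ring
    rw [h r, h r', hrr']
  intro π
  unfold Qfun
  rw [key]
end

section
/- Suppose ρ : S → ℝ satisfies ρ(s) > 0 for all s, and the transitions are given by the finite-rank model P ((s,a), s') = (χ(s,a) ⬝ μ(s')) * ρ(s') for all (s,a) and s', with χ : S × A → ℝ^d and μ : S → ℝ^d. Equip the space of functions S → ℝ with the inner product ⟨x, y⟩_ρ := ∑_s ρ(s) * x(s) * y(s). For a reward r : S → ℝ, let r' be the orthogonal projection of r (with respect to ⟨·,·⟩_ρ) onto the linear span of the d coordinate feature functions s ↦ (μ(s))_i, i = 1, …, d. Then Q^π_r = Q^π_{r'} for every deterministic policy π; consequently, every policy that is optimal for r' is also optimal for r. -/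
open Matrix

/-- Under the finite-rank transition model
`P ((s,a), s') = (χ(s,a) ⬝ μ(s')) * ρ(s')` with `ρ > 0`, let `r'` be the orthogonal
projection of the reward `r`, with respect to the inner product
`⟨x, y⟩_ρ = ∑_s ρ(s) x(s) y(s)`, onto the span of the coordinate feature functions
`s ↦ μ(s) i`. Then `Q^π_r = Q^π_{r'}` for every deterministic policy `π`; consequently every
policy optimal for `r'` is also optimal for `r`. -/
theorem stmt9 {S A : Type*} [Fintype S] [Fintype A] [Nonempty S] [Nonempty A]
    [DecidableEq S] [DecidableEq A]
    (P : Matrix (S × A) S ℝ) (γ : ℝ)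
    (hP0 : ∀ sa s', 0 ≤ P sa s') (hP1 : ∀ sa, ∑ s', P sa s' = 1)
    (hγ0 : 0 ≤ γ) (hγ1 : γ < 1)
    (ρ : S → ℝ) (hρ : ∀ s, 0 < ρ s)
    {d : ℕ} (χ : S × A → Fin d → ℝ) (μ : S → Fin d → ℝ)
    (hP : ∀ (sa : S × A) (s' : S), P sa s' = (χ sa ⬝ᵥ μ s') * ρ s')
    (r r' : S → ℝ)
    (hmem : r' ∈ Submodule.span ℝ (Set.range fun i : Fin d => fun s : S => μ s i))
    (hperp : ∀ g ∈ Submodule.span ℝ (Set.range fun i : Fin d => fun s : S => μ s i),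
      ∑ s, ρ s * (r s - r' s) * g s = 0) :
    (∀ π : S → A, Qfun P γ π r = Qfun P γ π r') ∧
    (∀ π : S → A,
      (∀ (π'' : S → A) (sa : S × A), Qfun P γ π'' r' sa ≤ Qfun P γ π r' sa) →
      (∀ (π'' : S → A) (sa : S × A), Qfun P γ π'' r sa ≤ Qfun P γ π r sa)) := by
  have key : P.mulVec r = P.mulVec r' := by
    funext sa
    have h0 : ∀ i : Fin d, ∑ s, ρ s * (r s - r' s) * μ s i = 0 := fun i =>
      hperp _ (Submodule.subset_span ⟨i, rfl⟩)
    simp only [Matrix.mulVec, dotProduct, hP]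
    rw [← sub_eq_zero, ← Finset.sum_sub_distrib]
    have expand : ∀ s' : S, (∑ i, χ sa i * μ s' i) * ρ s' * r s' - (∑ i, χ sa i * μ s' i) * ρ s' * r' s'
        = ∑ i, χ sa i * (ρ s' * (r s' - r' s') * μ s' i) := by
      intro s'
      simp only [Finset.sum_mul]
      rw [← Finset.sum_sub_distrib]
      exact Finset.sum_congr rfl fun i _ => by ring
    rw [Finset.sum_congr rfl (fun s' _ => expand s'), Finset.sum_comm]
    refine Finset.sum_eq_zero fun i _ => ?_
    rw [← Finset.mul_sum, h0 i, mul_zero]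
  have hQ : ∀ π : S → A, Qfun P γ π r = Qfun P γ π r' := by
    intro π; unfold Qfun; rw [key]
  exact ⟨hQ, fun π hopt π'' sa => by rw [hQ π, hQ π'']; exact hopt π'' sa⟩
end

section
/- Let S be a nonempty finite type, let ρ₂ : S × S → ℝ be a nonnegative function with ∑_{s,s'} ρ₂(s,s') = 1 whose two marginals coincide, i.e., ∑_{s'} ρ₂(s, s') = ∑_{s'} ρ₂(s', s) =: ρ(s) for every s ∈ S, and let φ : S → ℝ^d. Then ∑_{s,s'} ρ₂(s,s') * ‖φ(s) − φ(s')‖² + ∑_{s,s'} ρ(s) * ρ(s') * ((φ(s) ⬝ φ(s'))² − ‖φ(s)‖² − ‖φ(s')‖²) = −2 * ∑_{s,s'} ρ₂(s,s') * (φ(s) ⬝ φ(s')) + ∑_{s,s'} ρ(s) * ρ(s') * (φ(s) ⬝ φ(s'))². -/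
open scoped RealInnerProductSpace

/-- For a joint distribution `ρ₂` on pairs of states whose two marginals
coincide and equal `ρ`, the Laplacian-eigenfunction loss with regularization weight `λ = 1`
equals the asymmetric low-rank factorization loss:
`∑ ρ₂(s,s') ‖φ(s) − φ(s')‖² + ∑ ρ(s) ρ(s') ((φ(s)·φ(s'))² − ‖φ(s)‖² − ‖φ(s')‖²)
 = −2 ∑ ρ₂(s,s') (φ(s)·φ(s')) + ∑ ρ(s) ρ(s') (φ(s)·φ(s'))²`. -/
theorem stmt10 {S : Type*} [Fintype S] [Nonempty S] {d : ℕ}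
    (ρ₂ : S × S → ℝ) (hρ₂0 : ∀ p, 0 ≤ ρ₂ p) (hρ₂1 : ∑ p : S × S, ρ₂ p = 1)
    (ρ : S → ℝ)
    (hmarg1 : ∀ s, ∑ s', ρ₂ (s, s') = ρ s)
    (hmarg2 : ∀ s, ∑ s', ρ₂ (s', s) = ρ s)
    (φ : S → EuclideanSpace ℝ (Fin d)) :
    (∑ s, ∑ s', ρ₂ (s, s') * ‖φ s - φ s'‖ ^ 2)
      + (∑ s, ∑ s', ρ s * ρ s' * (⟪φ s, φ s'⟫ ^ 2 - ‖φ s‖ ^ 2 - ‖φ s'‖ ^ 2))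
    = -2 * (∑ s, ∑ s', ρ₂ (s, s') * ⟪φ s, φ s'⟫)
      + ∑ s, ∑ s', ρ s * ρ s' * ⟪φ s, φ s'⟫ ^ 2 := by
  have hρ1 : ∑ s, ρ s = 1 := by
    rw [Fintype.sum_prod_type] at hρ₂1
    simp_rw [hmarg1] at hρ₂1
    exact hρ₂1
  set A := ∑ s, ρ s * ‖φ s‖ ^ 2 with hA
  have hB1 : ∑ s, ∑ s', ρ₂ (s, s') * ‖φ s‖ ^ 2 = A := by
    simp_rw [← Finset.sum_mul, hmarg1]
    exact hA.symm
  have hB2 : ∑ s, ∑ s', ρ₂ (s, s') * ‖φ s'‖ ^ 2 = A := by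
    rw [Finset.sum_comm]
    simp_rw [← Finset.sum_mul, hmarg2]
    exact hA.symm
  have hC1 : ∑ s, ∑ s', ρ s * ρ s' * ‖φ s‖ ^ 2 = A := by
    have : ∀ s s' : S, ρ s * ρ s' * ‖φ s‖ ^ 2 = ρ s' * (ρ s * ‖φ s‖ ^ 2) :=
      fun s s' => by ring
    simp_rw [this]
    rw [Finset.sum_comm]
    simp_rw [← Finset.mul_sum, ← Finset.sum_mul, hρ1, one_mul]
    exact hA.symm
  have hC2 : ∑ s, ∑ s', ρ s * ρ s' * ‖φ s'‖ ^ 2 = A := by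
    have : ∀ s s' : S, ρ s * ρ s' * ‖φ s'‖ ^ 2 = ρ s * (ρ s' * ‖φ s'‖ ^ 2) :=
      fun s s' => by ring
    simp_rw [this, ← Finset.mul_sum, ← Finset.sum_mul, hρ1, one_mul]
    exact hA.symm
  have h1 : (∑ s, ∑ s', ρ₂ (s, s') * ‖φ s - φ s'‖ ^ 2)
      = (∑ s, ∑ s', ρ₂ (s, s') * ‖φ s‖ ^ 2)
        - 2 * (∑ s, ∑ s', ρ₂ (s, s') * ⟪φ s, φ s'⟫)
        + (∑ s, ∑ s', ρ₂ (s, s') * ‖φ s'‖ ^ 2) := by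
    have : ∀ s s' : S, ρ₂ (s, s') * ‖φ s - φ s'‖ ^ 2
        = ρ₂ (s, s') * ‖φ s‖ ^ 2 - 2 * (ρ₂ (s, s') * ⟪φ s, φ s'⟫)
          + ρ₂ (s, s') * ‖φ s'‖ ^ 2 := fun s s' => by
      rw [norm_sub_sq_real]; ring
    simp_rw [this, Finset.sum_add_distrib, Finset.sum_sub_distrib, ← Finset.mul_sum]
  have h2 : (∑ s, ∑ s', ρ s * ρ s' * (⟪φ s, φ s'⟫ ^ 2 - ‖φ s‖ ^ 2 - ‖φ s'‖ ^ 2))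
      = (∑ s, ∑ s', ρ s * ρ s' * ⟪φ s, φ s'⟫ ^ 2)
        - (∑ s, ∑ s', ρ s * ρ s' * ‖φ s‖ ^ 2)
        - (∑ s, ∑ s', ρ s * ρ s' * ‖φ s'‖ ^ 2) := by
    simp_rw [mul_sub, Finset.sum_sub_distrib]
  rw [h1, h2, hB1, hB2, hC1, hC2]; ring
end

section
/- Let S be a nonempty finite type, let Q : Matrix S S ℝ be row-stochastic (all entries nonnegative and each row sums to 1), and let γ be a real number with 0 ≤ γ < 1. Then the normalized successor matrix M̃ := (1 − γ) • ∑_{t≥0} γ^t • Q^{t+1} is well defined (the series converges entrywise absolutely), equals (1 − γ) • (Q * (1 − γ • Q)⁻¹), and is itself row-stochastic: all its entries are nonnegative and each of its rows sums to 1. -/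
open Matrix

/-- For a row-stochastic `Q` and `0 ≤ γ < 1`, the normalized successor
matrix `M̃ = (1 − γ) • ∑_{t ≥ 0} γ^t • Q^{t+1}` is well defined (the series converges
entrywise absolutely), equals `(1 − γ) • (Q * (1 − γ • Q)⁻¹)`, and is itself
row-stochastic. -/
theorem stmt13 {S : Type*} [Fintype S] [Nonempty S] [DecidableEq S]
    (Q : Matrix S S ℝ) (γ : ℝ)
    (hQ0 : ∀ i j, 0 ≤ Q i j) (hQ1 : ∀ i, ∑ j, Q i j = 1)
    (hγ0 : 0 ≤ γ) (hγ1 : γ < 1)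
    (M : Matrix S S ℝ) (hM : M = (1 - γ) • ∑' t : ℕ, γ ^ t • Q ^ (t + 1)) :
    (∀ i j, Summable fun t : ℕ => |(γ ^ t • Q ^ (t + 1)) i j|) ∧
    M = (1 - γ) • (Q * (1 - γ • Q)⁻¹) ∧
    (∀ i j, 0 ≤ M i j) ∧ (∀ i, ∑ j, M i j = 1) := by
  -- powers of Q are stochastic
  have hpn : ∀ n : ℕ, (∀ i j, 0 ≤ (Q ^ n) i j) ∧ (∀ i, ∑ j, (Q ^ n) i j = 1) := by
    intro n
    induction n with
    | zero =>
      constructor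
      · intro i j; simp [Matrix.one_apply]; split <;> norm_num
      · intro i; simp [Matrix.one_apply]
    | succ n ih =>
      constructor
      · intro i j
        rw [pow_succ, Matrix.mul_apply]
        exact Finset.sum_nonneg fun k _ => mul_nonneg (ih.1 i k) (hQ0 k j)
      · intro i
        simp only [pow_succ, Matrix.mul_apply]
        rw [Finset.sum_comm]
        calc ∑ k, ∑ j, (Q ^ n) i k * Q k j
            = ∑ k, (Q ^ n) i k * ∑ j, Q k j := by
              simp [Finset.mul_sum]
          _ = ∑ k, (Q ^ n) i k := by simp [hQ1]
          _ = 1 := ih.2 i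
  have hle : ∀ (n : ℕ) i j, (Q ^ n) i j ≤ 1 := by
    intro n i j
    calc (Q ^ n) i j ≤ ∑ j', (Q ^ n) i j' :=
          Finset.single_le_sum (fun k _ => (hpn n).1 i k) (Finset.mem_univ j)
      _ = 1 := (hpn n).2 i
  have hγs : Summable fun t : ℕ => γ ^ t := summable_geometric_of_lt_one hγ0 hγ1
  -- entry value and bounds
  have hval : ∀ (t : ℕ) i j, (γ ^ t • Q ^ (t + 1)) i j = γ ^ t * (Q ^ (t + 1)) i j := by
    intro t i j; simp [Matrix.smul_apply]
  have hnn : ∀ (t : ℕ) i j, 0 ≤ (γ ^ t • Q ^ (t + 1)) i j := by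
    intro t i j; rw [hval]; exact mul_nonneg (pow_nonneg hγ0 t) ((hpn _).1 i j)
  have hbd : ∀ (t : ℕ) i j, (γ ^ t • Q ^ (t + 1)) i j ≤ γ ^ t := by
    intro t i j; rw [hval]
    exact mul_le_of_le_one_right (pow_nonneg hγ0 t) (hle _ i j)
  have habs : ∀ i j, Summable fun t : ℕ => |(γ ^ t • Q ^ (t + 1)) i j| := by
    intro i j
    refine Summable.of_nonneg_of_le (fun t => abs_nonneg _) (fun t => ?_) hγs
    rw [abs_of_nonneg (hnn t i j)]; exact hbd t i j
  have hsum : ∀ i j, Summable fun t : ℕ => (γ ^ t • Q ^ (t + 1)) i j := by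
    intro i j; exact summable_abs_iff.mp (habs i j)
  have hSf : Summable fun t : ℕ => γ ^ t • Q ^ (t + 1) :=
    Pi.summable.mpr fun i => Pi.summable.mpr fun j => hsum i j
  -- powers of γ • Q
  have hgp : ∀ t : ℕ, (γ • Q) ^ t = γ ^ t • Q ^ t := fun t => smul_pow γ Q t
  have hSg : Summable fun t : ℕ => (γ • Q) ^ t := by
    refine Pi.summable.mpr fun i => Pi.summable.mpr fun j => ?_
    refine summable_abs_iff.mp ?_
    refine Summable.of_nonneg_of_le (fun t => abs_nonneg _) (fun t => ?_) hγs
    rw [hgp t, Matrix.smul_apply, smul_eq_mul,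
      abs_of_nonneg (mul_nonneg (pow_nonneg hγ0 t) ((hpn t).1 i j))]
    exact mul_le_of_le_one_right (pow_nonneg hγ0 t) (hle t i j)
  set A : Matrix S S ℝ := ∑' t : ℕ, (γ • Q) ^ t with hAdef
  have hA : HasSum (fun t : ℕ => (γ • Q) ^ t) A := hSg.hasSum
  -- (γ•Q)^n → 0
  have h0 : Filter.Tendsto (fun n : ℕ => (γ • Q) ^ n) Filter.atTop (nhds 0) := by
    refine tendsto_pi_nhds.mpr fun i => ?_
    rw [tendsto_pi_nhds]; intro j
    have : ∀ n : ℕ, ‖((γ • Q) ^ n) i j‖ ≤ γ ^ n := by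
      intro n
      rw [hgp n, Matrix.smul_apply, smul_eq_mul, Real.norm_eq_abs,
        abs_of_nonneg (mul_nonneg (pow_nonneg hγ0 n) ((hpn n).1 i j))]
      exact mul_le_of_le_one_right (pow_nonneg hγ0 n) (hle n i j)
    simpa using squeeze_zero_norm this (tendsto_pow_atTop_nhds_zero_of_lt_one hγ0 hγ1)
  -- telescoping: (1 - γ•Q) * A = 1
  have key : (1 - γ • Q) * A = 1 := by
    have h1 : HasSum (fun t : ℕ => (1 - γ • Q) * (γ • Q) ^ t) ((1 - γ • Q) * A) :=
      hA.mul_left _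
    have h2 : (fun t : ℕ => (1 - γ • Q) * (γ • Q) ^ t)
        = fun t : ℕ => (γ • Q) ^ t - (γ • Q) ^ (t + 1) := by
      funext t; rw [sub_mul, one_mul, pow_succ']
    rw [h2] at h1
    have h3 : Filter.Tendsto
        (fun n : ℕ => ∑ t ∈ Finset.range n, ((γ • Q) ^ t - (γ • Q) ^ (t + 1)))
        Filter.atTop (nhds (1 - 0)) := by
      simp only [Finset.sum_range_sub']
      exact (tendsto_const_nhds.sub h0).congr (by simp)
    have := tendsto_nhds_unique h1.tendsto_sum_nat h3
    rw [this, sub_zero]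
  have hinv : (1 - γ • Q)⁻¹ = A := Matrix.inv_eq_right_inv key
  -- Q * A = tsum
  have heq : (fun t : ℕ => Q * (γ • Q) ^ t) = fun t : ℕ => γ ^ t • Q ^ (t + 1) := by
    funext t; rw [hgp, mul_smul_comm, ← pow_succ']
  have hQA : HasSum (fun t : ℕ => γ ^ t • Q ^ (t + 1)) (Q * A) := by
    have h1 : HasSum (fun t : ℕ => Q * (γ • Q) ^ t) (Q * A) := hA.mul_left Q
    rwa [heq] at h1
  have htsum : (∑' t : ℕ, γ ^ t • Q ^ (t + 1)) = Q * A := hQA.tsum_eq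
  have hMform : M = (1 - γ) • (Q * (1 - γ • Q)⁻¹) := by
    rw [hM, htsum, hinv]
  -- entrywise formula for M
  have hMentry : ∀ i j, M i j = (1 - γ) * ∑' t : ℕ, (γ ^ t • Q ^ (t + 1)) i j := by
    intro i j
    rw [hM, Matrix.smul_apply, smul_eq_mul]
    erw [tsum_apply hSf,
      tsum_apply (Pi.summable.mp hSf i)]
  refine ⟨habs, hMform, ?_, ?_⟩
  · intro i j
    rw [hMentry]
    exact mul_nonneg (by linarith) (tsum_nonneg fun t => hnn t i j)
  · intro i
    have hswap : ∑ j, ∑' t : ℕ, (γ ^ t • Q ^ (t + 1)) i j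
        = ∑' t : ℕ, ∑ j, (γ ^ t • Q ^ (t + 1)) i j :=
      (Summable.tsum_finsetSum fun j _ => hsum i j).symm
    have hrow : ∀ t : ℕ, ∑ j, (γ ^ t • Q ^ (t + 1)) i j = γ ^ t := by
      intro t
      simp only [hval, ← Finset.mul_sum, (hpn (t + 1)).2 i, mul_one]
    simp only [hMentry, ← Finset.mul_sum]
    rw [hswap]
    simp only [hrow]
    rw [tsum_geometric_of_lt_one hγ0 hγ1, mul_inv_cancel₀ (by linarith)]
end

section
/- Let S and A be nonempty finite types, γ ∈ ℝ, let P : Matrix (S × A) S ℝ be row-stochastic, let π : S → A be a fixed policy, let ν : S × A → ℝ be nonnegative weights and ρ : S → ℝ strictly positive weights, and fix target maps F̄ : S × A → ℝ^d and B̄ : S → ℝ^d. For F : S × A → ℝ^d and B : S → ℝ^d define L(F,B) := ∑_{(s,a)} ν(s,a) * ∑_{s'} ρ(s') * ( F(s,a) ⬝ B(s') − P((s,a),s')/ρ(s') − γ * ∑_{s₁} P((s,a),s₁) * (F̄(s₁, π s₁) ⬝ B̄(s')) )² and L̂(F,B) := ∑_{(s,a)} ν(s,a) * ∑_{s₁}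 P((s,a),s₁) * ∑_{s'} ρ(s') * ( F(s,a) ⬝ B(s') − γ * (F̄(s₁, π s₁) ⬝ B̄(s')) )² − 2 * ∑_{(s,a)} ν(s,a) * ∑_{s₁} P((s,a),s₁) * (F(s,a) ⬝ B(s₁)). Then the difference L − L̂ does not depend on (F, B): for all F, B, F', B', one has L(F,B) − L̂(F,B) = L(F',B') − L̂(F',B'). -/
open Matrix

lemma key16 {S : Type*} [Fintype S] (γ : ℝ) (ρ : S → ℝ) (hρ : ∀ s, ρ s ≠ 0)
    (p : S → ℝ) (hp : ∑ s, p s = 1) (x : S → ℝ) (f : S → S → ℝ) :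
    (∑ s', ρ s' * (x s' - p s' / ρ s' - γ * ∑ s₁, p s₁ * f s₁ s') ^ 2)
      - ((∑ s₁, p s₁ * ∑ s', ρ s' * (x s' - γ * f s₁ s') ^ 2)
          - 2 * ∑ s₁, p s₁ * x s₁)
    = ∑ s', ρ s' * ((p s' / ρ s' + γ * ∑ s₁, p s₁ * f s₁ s') ^ 2
        - γ ^ 2 * ∑ s₁, p s₁ * (f s₁ s') ^ 2) := by
  have swap : (∑ s₁, p s₁ * ∑ s', ρ s' * (x s' - γ * f s₁ s') ^ 2)
      = ∑ s', ∑ s₁, p s₁ * (ρ s' * (x s' - γ * f s₁ s') ^ 2) := by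
    simp_rw [Finset.mul_sum]
    rw [Finset.sum_comm]
  have expand : ∀ s', ∑ s₁, p s₁ * (ρ s' * (x s' - γ * f s₁ s') ^ 2)
      = ρ s' * ((x s') ^ 2 - 2 * γ * x s' * (∑ s₁, p s₁ * f s₁ s')
          + γ ^ 2 * ∑ s₁, p s₁ * (f s₁ s') ^ 2) := by
    intro s'
    have h1 : ∑ s₁, p s₁ * (ρ s' * (x s' - γ * f s₁ s') ^ 2)
        = ∑ s₁, (ρ s' * (x s') ^ 2 * p s₁
            - ρ s' * (2 * γ * x s') * (p s₁ * f s₁ s')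
            + ρ s' * γ ^ 2 * (p s₁ * (f s₁ s') ^ 2)) := by
      refine Finset.sum_congr rfl fun s₁ _ => by ring
    rw [h1, Finset.sum_add_distrib, Finset.sum_sub_distrib, ← Finset.mul_sum,
      ← Finset.mul_sum, ← Finset.mul_sum, hp]
    ring
  rw [swap]
  simp_rw [expand]
  rw [Finset.mul_sum, sub_sub_eq_add_sub, ← Finset.sum_add_distrib, ← Finset.sum_sub_distrib]
  refine Finset.sum_congr rfl fun s' _ => ?_
  have h := hρ s'
  field_simp
  ring

/-- With a row-stochastic transition matrix `P`, dataset weights `ν ≥ 0`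
on state-actions and `ρ > 0` on states, a fixed policy `π` and fixed target networks
`F̄, B̄`, the ρ-weighted squared Bellman residual loss `L` of the finite-rank model
`M = Fᵀ B ρ` and the sampled forward-backward training loss `L̂` differ by a quantity that
does not depend on the trainable parameters `(F, B)`. -/
theorem stmt16 {S A : Type*} [Fintype S] [Fintype A] [Nonempty S] [Nonempty A]
    {d : ℕ} (γ : ℝ) (P : Matrix (S × A) S ℝ)
    (hP0 : ∀ sa s', 0 ≤ P sa s') (hP1 : ∀ sa, ∑ s', P sa s' = 1)
    (π : S → A)
    (ν : S × A → ℝ) (hν : ∀ sa, 0 ≤ ν sa)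
    (ρ : S → ℝ) (hρ : ∀ s, 0 < ρ s)
    (Fbar : S × A → Fin d → ℝ) (Bbar : S → Fin d → ℝ)
    (L Lhat : (S × A → Fin d → ℝ) → (S → Fin d → ℝ) → ℝ)
    (hL : ∀ F B, L F B = ∑ sa, ν sa * ∑ s', ρ s' *
      (F sa ⬝ᵥ B s' - P sa s' / ρ s'
        - γ * ∑ s₁, P sa s₁ * (Fbar (s₁, π s₁) ⬝ᵥ Bbar s')) ^ 2)
    (hLhat : ∀ F B, Lhat F B =
      (∑ sa, ν sa * ∑ s₁, P sa s₁ * ∑ s', ρ s' *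
        (F sa ⬝ᵥ B s' - γ * (Fbar (s₁, π s₁) ⬝ᵥ Bbar s')) ^ 2)
      - 2 * ∑ sa, ν sa * ∑ s₁, P sa s₁ * (F sa ⬝ᵥ B s₁)) :
    ∀ (F : S × A → Fin d → ℝ) (B : S → Fin d → ℝ)
      (F' : S × A → Fin d → ℝ) (B' : S → Fin d → ℝ),
      L F B - Lhat F B = L F' B' - Lhat F' B' := by
  have main : ∀ (F : S × A → Fin d → ℝ) (B : S → Fin d → ℝ),
      L F B - Lhat F B = ∑ sa, ν sa * ∑ s', ρ s' *
        ((P sa s' / ρ s' + γ * ∑ s₁, P sa s₁ * (Fbar (s₁, π s₁) ⬝ᵥ Bbar s')) ^ 2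
          - γ ^ 2 * ∑ s₁, P sa s₁ * (Fbar (s₁, π s₁) ⬝ᵥ Bbar s') ^ 2) := by
    intro F B
    rw [hL, hLhat]
    rw [Finset.mul_sum, sub_sub_eq_add_sub, ← Finset.sum_add_distrib,
      ← Finset.sum_sub_distrib]
    refine Finset.sum_congr rfl fun sa _ => ?_
    have hk := key16 γ ρ (fun s => (hρ s).ne') (P sa) (hP1 sa)
      (fun s' => F sa ⬝ᵥ B s') (fun s₁ s' => Fbar (s₁, π s₁) ⬝ᵥ Bbar s')
    linear_combination ν sa * hk
  intro F B F' B'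
  rw [main F B, main F' B']
end
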